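/- If p_2 = (p_1^2 + (4 - p_1^2)ζ)/2 for complex numbers p_1, ζ, then (1/256)(-p_1^4 - 4p_2^2 + 4p_1^2(4 + p_2)) = (1/256)(-p_1^4 ζ^2 - 16ζ^2 + 16p_1^2 + 8p_1^2 ζ^2), and if |p_1| ≤ 2 and |ζ| ≤ 1 its modulus is at most (1/256)(|p_1|^4 + 24|p_1|^2 + 16) ≤ 1/2. -/

import Mathlib

/-- With `p₂ = (p₁² + (4 - p₁²)ζ)/2`, the Toeplitz expression transforms as stated,
and for `|p₁| ≤ 2`, `|ζ| ≤ 1` its modulus is at most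
`(1/256)(|p₁|⁴ + 24|p₁|² + 16) ≤ 1/2`. -/
theorem toeplitz_substitution (p1 p2 ζ : ℂ)
    (hp2 : p2 = (p1 ^ 2 + (4 - p1 ^ 2) * ζ) / 2)
    (hp1 : ‖p1‖ ≤ 2) (hζ : ‖ζ‖ ≤ 1) :
    (1 / 256 : ℂ) * (-p1 ^ 4 - 4 * p2 ^ 2 + 4 * p1 ^ 2 * (4 + p2)) =
        (1 / 256 : ℂ) * (-p1 ^ 4 * ζ ^ 2 - 16 * ζ ^ 2 + 16 * p1 ^ 2 + 8 * p1 ^ 2 * ζ ^ 2) ∧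
      ‖(1 / 256 : ℂ) * (-p1 ^ 4 - 4 * p2 ^ 2 + 4 * p1 ^ 2 * (4 + p2))‖ ≤
        (1 / 256) * ((‖p1‖) ^ 4 + 24 * (‖p1‖) ^ 2 + 16) ∧
      (1 / 256) * ((‖p1‖) ^ 4 + 24 * (‖p1‖) ^ 2 + 16) ≤ 1 / 2 := by
  have hid : (1 / 256 : ℂ) * (-p1 ^ 4 - 4 * p2 ^ 2 + 4 * p1 ^ 2 * (4 + p2)) =
      (1 / 256 : ℂ) * (-p1 ^ 4 * ζ ^ 2 - 16 * ζ ^ 2 + 16 * p1 ^ 2 + 8 * p1 ^ 2 * ζ ^ 2) := by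
    subst hp2; ring
  refine ⟨hid, ?_, ?_⟩
  · rw [hid]
    have h0 : (0:ℝ) ≤ ‖p1‖ := norm_nonneg _
    have hz0 : (0:ℝ) ≤ ‖ζ‖ := norm_nonneg _
    have h1 : ‖-p1 ^ 4 * ζ ^ 2 - 16 * ζ ^ 2 + 16 * p1 ^ 2 + 8 * p1 ^ 2 * ζ ^ 2‖ ≤
        (‖p1‖) ^ 4 + 24 * (‖p1‖) ^ 2 + 16 := by
      calc ‖-p1 ^ 4 * ζ ^ 2 - 16 * ζ ^ 2 + 16 * p1 ^ 2 + 8 * p1 ^ 2 * ζ ^ 2‖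
          ≤ ‖-p1 ^ 4 * ζ ^ 2 - 16 * ζ ^ 2 + 16 * p1 ^ 2‖ +
            ‖8 * p1 ^ 2 * ζ ^ 2‖ := norm_add_le _ _
        _ ≤ ‖-p1 ^ 4 * ζ ^ 2 - 16 * ζ ^ 2‖ + ‖16 * p1 ^ 2‖ +
            ‖8 * p1 ^ 2 * ζ ^ 2‖ := by
              gcongr; exact norm_add_le _ _
        _ ≤ ‖-p1 ^ 4 * ζ ^ 2‖ + ‖16 * ζ ^ 2‖ +
            ‖16 * p1 ^ 2‖ + ‖8 * p1 ^ 2 * ζ ^ 2‖ := by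
              gcongr; exact norm_sub_le _ _
        _ ≤ (‖p1‖) ^ 4 + 24 * (‖p1‖) ^ 2 + 16 := by
              simp only [norm_mul, norm_neg, norm_pow, Complex.norm_ofNat]
              have hz2 : (‖ζ‖) ^ 2 ≤ 1 := by nlinarith
              nlinarith [pow_nonneg h0 2, pow_nonneg h0 4, sq_nonneg (‖p1‖ ^ 2)]
    calc ‖(1 / 256 : ℂ) *
          (-p1 ^ 4 * ζ ^ 2 - 16 * ζ ^ 2 + 16 * p1 ^ 2 + 8 * p1 ^ 2 * ζ ^ 2)‖
        = (1 / 256) *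
          ‖-p1 ^ 4 * ζ ^ 2 - 16 * ζ ^ 2 + 16 * p1 ^ 2 + 8 * p1 ^ 2 * ζ ^ 2‖ := by
          rw [norm_mul]; norm_num
      _ ≤ (1 / 256) * ((‖p1‖) ^ 4 + 24 * (‖p1‖) ^ 2 + 16) := by linarith
  · have h0 : (0:ℝ) ≤ ‖p1‖ := norm_nonneg _
    have h2 : (‖p1‖) ^ 2 ≤ 4 := by nlinarith
    have h4 : (‖p1‖) ^ 4 ≤ 16 := by nlinarith [sq_nonneg (‖p1‖)]
    linarith
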